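/- Let h = yᵈ + h₁(x)y^{d−1} + ⋯ + h_d(x) be a monic polynomial with coefficients in ℂ[[x]] with d ≥ 2, such that h is not of the form (y − b(x))ᵈ for any b(x) ∈ ℂ[[x]]. Then there exist an integer r > 0 and monic polynomials g₁, g₂ ∈ ℂ[[x]][y] in y of degrees d₁, d₂ < d such that h(x^r, y) = g₁(x,y)·g₂(x,y). -/

import Mathlib

open Polynomial PowerSeries Finset

noncomputable def substPow {R : Type*} [Semiring R] (n : ℕ) (f : PowerSeries R) :
    PowerSeries R :=
  PowerSeries.mk fun m => if n ∣ m then PowerSeries.coeff (m / n) f else 0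

section substPow
variable {R : Type*} [CommRing R] (r : ℕ) (hr : 0 < r)

@[simp] lemma substPow_coeff (f : PowerSeries R) (m : ℕ) :
    PowerSeries.coeff m (substPow r f) = if r ∣ m then PowerSeries.coeff (m / r) f else 0 := by
  simp [substPow]

lemma substPow_zero' : substPow r (0 : PowerSeries R) = 0 := by
  ext m; simp

lemma substPow_one (hr : 0 < r) : substPow r (1 : PowerSeries R) = 1 := by
  ext m
  simp only [substPow_coeff, PowerSeries.coeff_one]
  by_cases hm : r ∣ m
  · obtain ⟨s, rfl⟩ := hm
    rw [if_pos ⟨s, rfl⟩, Nat.mul_div_cancel_left s hr]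
    by_cases hs : s = 0 <;> simp [hs, Nat.mul_eq_zero, hr.ne']
  · rw [if_neg hm, if_neg (by rintro rfl; exact hm (dvd_zero r))]

lemma substPow_add (f g : PowerSeries R) :
    substPow r (f + g) = substPow r f + substPow r g := by
  ext m; simp only [substPow_coeff, map_add]
  split_ifs <;> simp

lemma substPow_mul (hr : 0 < r) (f g : PowerSeries R) :
    substPow r (f * g) = substPow r f * substPow r g := by
  ext m
  rw [PowerSeries.coeff_mul, substPow_coeff]
  by_cases hm : r ∣ m
  · rw [if_pos hm]
    obtain ⟨s, rfl⟩ := hm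
    rw [Nat.mul_div_cancel_left s hr, PowerSeries.coeff_mul]
    have hsub : (Finset.HasAntidiagonal.antidiagonal s).image (fun p => (r * p.1, r * p.2)) ⊆
        Finset.HasAntidiagonal.antidiagonal (r * s) := by
      intro p hp
      simp only [Finset.mem_image, Finset.HasAntidiagonal.mem_antidiagonal] at hp ⊢
      obtain ⟨q, hq, rfl⟩ := hp
      rw [← Nat.mul_add, hq]
    have hvan : ∀ p ∈ Finset.HasAntidiagonal.antidiagonal (r * s),
        p ∉ (Finset.HasAntidiagonal.antidiagonal s).image (fun p => (r * p.1, r * p.2)) →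
        PowerSeries.coeff p.1 (substPow r f) * PowerSeries.coeff p.2 (substPow r g) = 0 := by
      intro p hp hnp
      simp only [Finset.HasAntidiagonal.mem_antidiagonal] at hp
      by_cases d1 : r ∣ p.1
      · by_cases d2 : r ∣ p.2
        · exfalso
          apply hnp
          simp only [Finset.mem_image, Finset.HasAntidiagonal.mem_antidiagonal]
          obtain ⟨a, ha⟩ := d1
          obtain ⟨b, hb⟩ := d2
          refine ⟨(a, b), ?_, ?_⟩
          · rw [ha, hb, ← Nat.mul_add] at hp
            exact Nat.eq_of_mul_eq_mul_left hr hp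
          · simp [← ha, ← hb]
        · simp [substPow_coeff, d2]
      · simp [substPow_coeff, d1]
    have hinj : ∀ p ∈ Finset.HasAntidiagonal.antidiagonal s, ∀ q ∈ Finset.HasAntidiagonal.antidiagonal s,
        (fun p : ℕ × ℕ => (r * p.1, r * p.2)) p = (fun p : ℕ × ℕ => (r * p.1, r * p.2)) q → p = q := by
      intro p _ q _ hpq
      have h1 : r * p.1 = r * q.1 := congrArg Prod.fst hpq
      have h2 : r * p.2 = r * q.2 := congrArg Prod.snd hpq
      ext
      · exact Nat.eq_of_mul_eq_mul_left hr h1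
      · exact Nat.eq_of_mul_eq_mul_left hr h2
    rw [← Finset.sum_subset hsub hvan, Finset.sum_image hinj]
    apply Finset.sum_congr rfl
    intro p hp
    simp [Nat.mul_div_cancel_left _ hr, Nat.dvd_mul_right]
  · rw [if_neg hm]
    symm
    apply Finset.sum_eq_zero
    intro p hp
    simp only [Finset.HasAntidiagonal.mem_antidiagonal] at hp
    by_cases d1 : r ∣ p.1
    · by_cases d2 : r ∣ p.2
      · exact absurd (hp ▸ Nat.dvd_add d1 d2) hm
      · simp [substPow_coeff, d2]
    · simp [substPow_coeff, d1]

/-- `substPow r` as a ring hom, for `0 < r`. -/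
noncomputable def substPowHom (hr : 0 < r) : PowerSeries R →+* PowerSeries R where
  toFun := substPow r
  map_one' := substPow_one r hr
  map_mul' := substPow_mul r hr
  map_zero' := substPow_zero' r
  map_add' := substPow_add r

end substPow

noncomputable def substPowPoly {R : Type*} [CommSemiring R] (n : ℕ)
    (P : Polynomial (PowerSeries R)) : Polynomial (PowerSeries R) :=
  ∑ k ∈ Finset.range (P.natDegree + 1), Polynomial.C (substPow n (P.coeff k)) * Polynomial.X ^ k

section helpers
variable {S : Type*} [CommRing S]

lemma coeff_sumCX (N : ℕ) (c : ℕ → S) (k : ℕ) :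
    (∑ i ∈ Finset.range N, Polynomial.C (c i) * Polynomial.X ^ i).coeff k =
      if k < N then c k else 0 := by
  rw [Polynomial.finset_sum_coeff]
  simp only [Polynomial.coeff_C_mul, Polynomial.coeff_X_pow, mul_ite, mul_one, mul_zero]
  rw [Finset.sum_ite_eq (Finset.range N) k c]
  simp [Finset.mem_range]

lemma monic_natDegree_of (p : Polynomial S) (N : ℕ) (h1 : p.coeff N = 1)
    (h0 : ∀ i, N < i → p.coeff i = 0) [Nontrivial S] : p.Monic ∧ p.natDegree = N := by
  have hle : p.natDegree ≤ N := Polynomial.natDegree_le_iff_coeff_eq_zero.mpr fun i hi => h0 i hi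
  have hge : N ≤ p.natDegree := Polynomial.le_natDegree_of_ne_zero (h1 ▸ one_ne_zero)
  have hd : p.natDegree = N := le_antisymm hle hge
  exact ⟨by rw [Polynomial.Monic, Polynomial.leadingCoeff, hd, h1], hd⟩

lemma degree_mul_lt_nat {F : Type*} [Field F] (p q : Polynomial F) (da db : ℕ)
    (hp : p.degree < (da : WithBot ℕ)) (hq : q.degree < (db : WithBot ℕ)) :
    (p * q).degree < ((da + db : ℕ) : WithBot ℕ) := by
  rcases eq_or_ne p 0 with rfl | hp0
  · rw [zero_mul, Polynomial.degree_zero]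
    exact WithBot.bot_lt_coe _
  rcases eq_or_ne q 0 with rfl | hq0
  · rw [mul_zero, Polynomial.degree_zero]
    exact WithBot.bot_lt_coe _
  have h1 : p.natDegree < da := by
    rwa [Polynomial.degree_eq_natDegree hp0, Nat.cast_lt] at hp
  have h2 : q.natDegree < db := by
    rwa [Polynomial.degree_eq_natDegree hq0, Nat.cast_lt] at hq
  rw [Polynomial.degree_mul, Polynomial.degree_eq_natDegree hp0, Polynomial.degree_eq_natDegree hq0]
  exact_mod_cast Nat.add_lt_add h1 h2

lemma substPowPoly_eq_map {R : Type*} [CommRing R] (r : ℕ) (hr : 0 < r)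
    (P : Polynomial (PowerSeries R)) :
    substPowPoly r P = P.map (substPowHom r hr) := by
  ext k
  rw [substPowPoly, coeff_sumCX, Polynomial.coeff_map]
  split_ifs with hk
  · rfl
  · push_neg at hk
    rw [Polynomial.coeff_eq_zero_of_natDegree_lt (by omega)]
    simp

end helpers

section hensel

lemma degree_mul_lt_nat' {F : Type*} [Field F] (p q : Polynomial F) (da db : ℕ)
    (hp : p.degree ≤ (da : WithBot ℕ)) (hq : q.degree < (db : WithBot ℕ)) :
    (p * q).degree < ((da + db : ℕ) : WithBot ℕ) := by
  rcases eq_or_ne p 0 with rfl | hp0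
  · rw [zero_mul, Polynomial.degree_zero]; exact WithBot.bot_lt_coe _
  rcases eq_or_ne q 0 with rfl | hq0
  · rw [mul_zero, Polynomial.degree_zero]; exact WithBot.bot_lt_coe _
  have h1 : p.natDegree ≤ da := by
    rwa [Polynomial.degree_eq_natDegree hp0, Nat.cast_le] at hp
  have h2 : q.natDegree < db := by
    rwa [Polynomial.degree_eq_natDegree hq0, Nat.cast_lt] at hq
  rw [Polynomial.degree_mul, Polynomial.degree_eq_natDegree hp0, Polynomial.degree_eq_natDegree hq0]
  exact_mod_cast Nat.add_lt_add_of_le_of_lt h1 h2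

variable (A B a b : Polynomial ℂ) (Fc : ℕ → Polynomial ℂ)

noncomputable def hseq : ℕ → Polynomial ℂ × Polynomial ℂ
  | 0 => (A, B)
  | (n+1) =>
    let R := Fc (n+1) - ∑ i ∈ (Finset.Ioo 0 (n+1)).attach,
      (hseq i.1).1 * (hseq ((n+1) - i.1)).2
    ((b * R) %ₘ A, a * R + B * ((b * R) /ₘ A))
  decreasing_by
  all_goals (have := Finset.mem_Ioo.mp i.2; omega)

noncomputable def hR (n : ℕ) : Polynomial ℂ :=
  Fc n - ∑ i ∈ (Finset.Ioo 0 n).attach,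
      (hseq A B a b Fc i.1).1 * (hseq A B a b Fc (n - i.1)).2

lemma hseq_zero : hseq A B a b Fc 0 = (A, B) := by rw [hseq]

lemma hseq_succ (n : ℕ) : hseq A B a b Fc (n+1) =
    ((b * hR A B a b Fc (n+1)) %ₘ A,
     a * hR A B a b Fc (n+1) + B * ((b * hR A B a b Fc (n+1)) /ₘ A)) := by
  rw [hseq, hR]

lemma hseq_lin (hbez : a * A + b * B = 1) (hA : A.Monic) (n : ℕ) :
    A * (hseq A B a b Fc (n+1)).2 + B * (hseq A B a b Fc (n+1)).1 = hR A B a b Fc (n+1) := by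
  rw [hseq_succ]
  dsimp only
  rw [Polynomial.modByMonic_eq_sub_mul_div _ A]
  linear_combination hR A B a b Fc (n+1) * hbez

lemma hseq_sum (hbez : a * A + b * B = 1) (hA : A.Monic) (n : ℕ) (hn : 0 < n) :
    ∑ p ∈ Finset.HasAntidiagonal.antidiagonal n,
      (hseq A B a b Fc p.1).1 * (hseq A B a b Fc p.2).2 = Fc n := by
  obtain ⟨m, rfl⟩ : ∃ m, n = m + 1 := ⟨n - 1, by omega⟩
  rw [Finset.Nat.sum_antidiagonal_eq_sum_range_succ_mk, Finset.sum_range_succ]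
  have hrange : Finset.range (m + 1) = insert 0 (Finset.Ioo 0 (m + 1)) := by
    ext x; simp only [Finset.mem_range, Finset.mem_insert, Finset.mem_Ioo]; omega
  rw [hrange, Finset.sum_insert (by simp)]
  dsimp only
  have hl := hseq_lin A B a b Fc hbez hA m
  rw [hR, Finset.sum_attach (Finset.Ioo 0 (m+1))
    (fun i => (hseq A B a b Fc i).1 * (hseq A B a b Fc ((m+1) - i)).2)] at hl
  simp only [Nat.sub_self, Nat.sub_zero, hseq_zero]
  linear_combination hl

lemma hseq_deg (hbez : a * A + b * B = 1) (hA : A.Monic) (hB : B.Monic)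
    (hFc : ∀ n, 0 < n → (Fc n).degree < ((A.natDegree + B.natDegree : ℕ) : WithBot ℕ)) :
    ∀ n, 0 < n → (hseq A B a b Fc n).1.degree < (A.natDegree : WithBot ℕ) ∧
      (hseq A B a b Fc n).2.degree < (B.natDegree : WithBot ℕ) := by
  intro n
  induction n using Nat.strong_induction_on with
  | _ n IH =>
    intro hn
    obtain ⟨k, rfl⟩ : ∃ k, n = k + 1 := ⟨n - 1, by omega⟩
    have hRdeg : (hR A B a b Fc (k+1)).degree < ((A.natDegree + B.natDegree : ℕ) : WithBot ℕ) := by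
      rw [hR]
      refine lt_of_le_of_lt (Polynomial.degree_sub_le _ _) (max_lt (hFc _ k.succ_pos) ?_)
      refine lt_of_le_of_lt (Polynomial.degree_sum_le _ _) ?_
      rw [Finset.sup_lt_iff (WithBot.bot_lt_coe _)]
      intro i _
      have hi := Finset.mem_Ioo.mp i.2
      have h1 := (IH i.1 (by omega) (by omega)).1
      have h2 := (IH ((k+1) - i.1) (by omega) (by omega)).2
      exact degree_mul_lt_nat' _ _ _ _ h1.le h2
    have hfdeg : (hseq A B a b Fc (k+1)).1.degree < (A.natDegree : WithBot ℕ) := by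
      rw [hseq_succ]
      exact lt_of_lt_of_le (Polynomial.degree_modByMonic_lt _ hA)
        (le_of_eq (Polynomial.degree_eq_natDegree hA.ne_zero))
    refine ⟨hfdeg, ?_⟩
    have hlin := hseq_lin A B a b Fc hbez hA k
    set f := (hseq A B a b Fc (k+1)).1
    set g := (hseq A B a b Fc (k+1)).2
    have heq : A * g = hR A B a b Fc (k+1) - B * f := by linear_combination hlin
    have hrhs : (hR A B a b Fc (k+1) - B * f).degree
        < ((A.natDegree + B.natDegree : ℕ) : WithBot ℕ) := by
      refine lt_of_le_of_lt (Polynomial.degree_sub_le _ _) (max_lt hRdeg ?_)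
      rw [Nat.add_comm]
      exact degree_mul_lt_nat' _ _ _ _
        (le_of_eq (Polynomial.degree_eq_natDegree hB.ne_zero)) hfdeg
    rcases eq_or_ne g 0 with hg | hg
    · rw [hg, Polynomial.degree_zero]; exact WithBot.bot_lt_coe _
    · have hAg : A.degree + g.degree < ((A.natDegree + B.natDegree : ℕ) : WithBot ℕ) := by
        rw [← Polynomial.degree_mul, heq]; exact hrhs
      rw [Polynomial.degree_eq_natDegree hA.ne_zero, Polynomial.degree_eq_natDegree hg] at hAg
      rw [Polynomial.degree_eq_natDegree hg]
      have hlt : A.natDegree + g.natDegree < A.natDegree + B.natDegree := by exact_mod_cast hAg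
      exact Nat.cast_lt.mpr (by omega)

end hensel

lemma hensel_lift (F : Polynomial (PowerSeries ℂ)) (A B : Polynomial ℂ)
    (hA : A.Monic) (hB : B.Monic) (hFm : F.Monic)
    (hFdeg : F.natDegree = A.natDegree + B.natDegree)
    (hcop : IsCoprime A B)
    (hred : ∀ k, PowerSeries.constantCoeff (F.coeff k) = (A * B).coeff k) :
    ∃ G₁ G₂ : Polynomial (PowerSeries ℂ), G₁.Monic ∧ G₂.Monic ∧
      G₁.natDegree = A.natDegree ∧ G₂.natDegree = B.natDegree ∧ F = G₁ * G₂ := by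
  obtain ⟨a, b, hbez⟩ := hcop
  set Fc : ℕ → Polynomial ℂ :=
    fun n => ⟨.ofCoeff (F.toFinsupp.coeff.mapRange (PowerSeries.coeff n) (map_zero _))⟩ with hFcdef
  have hFcCoeff : ∀ n k, (Fc n).coeff k = PowerSeries.coeff n (F.coeff k) := by
    intro n k
    rw [hFcdef]
    simp only [Polynomial.coeff_ofFinsupp, Finsupp.mapRange_apply]
    rfl
  have hFc0 : Fc 0 = A * B := by
    ext k
    rw [hFcCoeff, PowerSeries.coeff_zero_eq_constantCoeff_apply, hred]
  have hFcdeg : ∀ n, 0 < n →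
      (Fc n).degree < ((A.natDegree + B.natDegree : ℕ) : WithBot ℕ) := by
    intro n hn
    rw [Polynomial.degree_lt_iff_coeff_zero]
    intro m hm
    rw [hFcCoeff]
    rcases eq_or_lt_of_le (hFdeg ▸ hm) with heq | hlt
    · rw [← heq, hFm.coeff_natDegree, PowerSeries.coeff_one, if_neg hn.ne']
    · rw [Polynomial.coeff_eq_zero_of_natDegree_lt hlt, map_zero]
  have hdeg := hseq_deg A B a b Fc hbez hA hB hFcdeg
  have hsum : ∀ n, ∑ p ∈ Finset.HasAntidiagonal.antidiagonal n,
      (hseq A B a b Fc p.1).1 * (hseq A B a b Fc p.2).2 = Fc n := by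
    intro n
    rcases Nat.eq_zero_or_pos n with rfl | hn
    · simp [hseq_zero, hFc0]
    · exact hseq_sum A B a b Fc hbez hA n hn
  -- the lifted factors
  set G₁ : Polynomial (PowerSeries ℂ) := ∑ i ∈ Finset.range (A.natDegree + 1),
    Polynomial.C (PowerSeries.mk fun n => ((hseq A B a b Fc n).1.coeff i)) * Polynomial.X ^ i
    with hG₁def
  set G₂ : Polynomial (PowerSeries ℂ) := ∑ i ∈ Finset.range (B.natDegree + 1),
    Polynomial.C (PowerSeries.mk fun n => ((hseq A B a b Fc n).2.coeff i)) * Polynomial.X ^ i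
    with hG₂def
  have hG₁c : ∀ i, G₁.coeff i = PowerSeries.mk fun n => ((hseq A B a b Fc n).1.coeff i) := by
    intro i
    rw [hG₁def, coeff_sumCX]
    split_ifs with hi
    · rfl
    · push_neg at hi
      symm
      ext n
      simp only [PowerSeries.coeff_mk, map_zero]
      rcases Nat.eq_zero_or_pos n with rfl | hn
      · rw [hseq_zero]
        dsimp only
        exact Polynomial.coeff_eq_zero_of_natDegree_lt (by omega)
      · refine Polynomial.coeff_eq_zero_of_degree_lt (lt_of_lt_of_le (hdeg n hn).1 ?_)
        exact Nat.cast_le.mpr (by omega)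
  have hG₂c : ∀ i, G₂.coeff i = PowerSeries.mk fun n => ((hseq A B a b Fc n).2.coeff i) := by
    intro i
    rw [hG₂def, coeff_sumCX]
    split_ifs with hi
    · rfl
    · push_neg at hi
      symm
      ext n
      simp only [PowerSeries.coeff_mk, map_zero]
      rcases Nat.eq_zero_or_pos n with rfl | hn
      · rw [hseq_zero]
        dsimp only
        exact Polynomial.coeff_eq_zero_of_natDegree_lt (by omega)
      · refine Polynomial.coeff_eq_zero_of_degree_lt (lt_of_lt_of_le (hdeg n hn).2 ?_)
        exact Nat.cast_le.mpr (by omega)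
  have hG₁top : G₁.coeff A.natDegree = 1 := by
    rw [hG₁c]
    ext n
    simp only [PowerSeries.coeff_mk, PowerSeries.coeff_one]
    rcases Nat.eq_zero_or_pos n with rfl | hn
    · rw [hseq_zero, if_pos rfl]
      exact hA.coeff_natDegree
    · rw [if_neg hn.ne']
      exact Polynomial.coeff_eq_zero_of_degree_lt (hdeg n hn).1
  have hG₂top : G₂.coeff B.natDegree = 1 := by
    rw [hG₂c]
    ext n
    simp only [PowerSeries.coeff_mk, PowerSeries.coeff_one]
    rcases Nat.eq_zero_or_pos n with rfl | hn
    · rw [hseq_zero, if_pos rfl]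
      exact hB.coeff_natDegree
    · rw [if_neg hn.ne']
      exact Polynomial.coeff_eq_zero_of_degree_lt (hdeg n hn).2
  have hG₁hi : ∀ i, A.natDegree < i → G₁.coeff i = 0 := by
    intro i hi
    rw [hG₁c]
    ext n
    simp only [PowerSeries.coeff_mk, map_zero]
    rcases Nat.eq_zero_or_pos n with rfl | hn
    · rw [hseq_zero]
      exact Polynomial.coeff_eq_zero_of_natDegree_lt hi
    · refine Polynomial.coeff_eq_zero_of_degree_lt (lt_of_lt_of_le (hdeg n hn).1 ?_)
      exact Nat.cast_le.mpr (by omega)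
  have hG₂hi : ∀ i, B.natDegree < i → G₂.coeff i = 0 := by
    intro i hi
    rw [hG₂c]
    ext n
    simp only [PowerSeries.coeff_mk, map_zero]
    rcases Nat.eq_zero_or_pos n with rfl | hn
    · rw [hseq_zero]
      exact Polynomial.coeff_eq_zero_of_natDegree_lt hi
    · refine Polynomial.coeff_eq_zero_of_degree_lt (lt_of_lt_of_le (hdeg n hn).2 ?_)
      exact Nat.cast_le.mpr (by omega)
  obtain ⟨hG₁m, hG₁d⟩ := monic_natDegree_of G₁ A.natDegree hG₁top hG₁hi
  obtain ⟨hG₂m, hG₂d⟩ := monic_natDegree_of G₂ B.natDegree hG₂top hG₂hi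
  refine ⟨G₁, G₂, hG₁m, hG₂m, hG₁d, hG₂d, ?_⟩
  apply Polynomial.ext
  intro k
  apply PowerSeries.ext
  intro n
  rw [Polynomial.coeff_mul, map_sum]
  have hrhs : ∀ p ∈ Finset.HasAntidiagonal.antidiagonal k,
      PowerSeries.coeff n (G₁.coeff p.1 * G₂.coeff p.2) =
      ∑ q ∈ Finset.HasAntidiagonal.antidiagonal n,
        ((hseq A B a b Fc q.1).1.coeff p.1) * ((hseq A B a b Fc q.2).2.coeff p.2) := by
    intro p _
    rw [hG₁c, hG₂c, PowerSeries.coeff_mul]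
    simp only [PowerSeries.coeff_mk]
  rw [Finset.sum_congr rfl hrhs, Finset.sum_comm]
  have hlhs : PowerSeries.coeff n (F.coeff k) = (Fc n).coeff k := (hFcCoeff n k).symm
  rw [hlhs, ← hsum n, Polynomial.finset_sum_coeff]
  refine Finset.sum_congr rfl ?_
  intro q _
  rw [Polynomial.coeff_mul]

lemma cfactor (d : ℕ) (hd : 2 ≤ d) (P : Polynomial ℂ) (hm : P.Monic) (hP : P.natDegree = d)
    (hnp : ¬ ∃ c : ℂ, P = (Polynomial.X - Polynomial.C c) ^ d) :
    ∃ A B : Polynomial ℂ, A.Monic ∧ B.Monic ∧ 0 < A.natDegree ∧ 0 < B.natDegree ∧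
      A.natDegree + B.natDegree = d ∧ IsCoprime A B ∧ P = A * B := by
  have hP0 : P ≠ 0 := hm.ne_zero
  have hdeg0 : P.degree ≠ 0 := by
    rw [Polynomial.degree_eq_natDegree hP0, hP]
    exact_mod_cast (by omega : d ≠ 0)
  obtain ⟨α, hα⟩ := IsAlgClosed.exists_root P hdeg0
  set k := P.rootMultiplicity α with hkdef
  have hk0 : 0 < k := (Polynomial.rootMultiplicity_pos hP0).mpr hα
  set A := (Polynomial.X - Polynomial.C α) ^ k with hAdef
  have hAm : A.Monic := (Polynomial.monic_X_sub_C α).pow k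
  have hdvd : A ∣ P := Polynomial.pow_rootMultiplicity_dvd P α
  set B := P /ₘ A with hBdef
  have hPAB : P = A * B := by
    have h2 := Polynomial.modByMonic_add_div P A
    rw [(Polynomial.modByMonic_eq_zero_iff_dvd hAm).mpr hdvd, zero_add] at h2
    exact h2.symm
  have hBm : B.Monic := hAm.of_mul_monic_left (hPAB ▸ hm)
  have hAdeg : A.natDegree = k := by
    rw [hAdef, Polynomial.natDegree_pow, Polynomial.natDegree_X_sub_C, mul_one]
  have hsum : k + B.natDegree = d := by
    rw [← hP, hPAB, Polynomial.natDegree_mul hAm.ne_zero hBm.ne_zero, hAdeg]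
  have hkd : k < d := by
    by_contra hk
    push_neg at hk
    have hBd : B.natDegree = 0 := by omega
    have hB1 : B = 1 := hBm.natDegree_eq_zero.mp hBd
    refine hnp ⟨α, ?_⟩
    rw [hPAB, hB1, mul_one, hAdef, show k = d by omega]
  have heval : B.eval α ≠ 0 := by
    rw [hBdef, hAdef, hkdef]
    exact Polynomial.eval_divByMonic_pow_rootMultiplicity_ne_zero α hP0
  have hcop1 : IsCoprime (Polynomial.X - Polynomial.C α) B := by
    set c := B.eval α with hcdef
    have hmod := Polynomial.modByMonic_add_div B (Polynomial.X - Polynomial.C α)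
    rw [Polynomial.modByMonic_X_sub_C_eq_C_eval] at hmod
    refine ⟨-(Polynomial.C c⁻¹) * (B /ₘ (Polynomial.X - Polynomial.C α)), Polynomial.C c⁻¹, ?_⟩
    have hcc : (Polynomial.C c⁻¹) * (Polynomial.C c) = 1 := by
      rw [← Polynomial.C_mul, inv_mul_cancel₀ heval, Polynomial.C_1]
    linear_combination (-(Polynomial.C c⁻¹)) * hmod + hcc
  exact ⟨A, B, hAm, hBm, by omega, by omega, by omega, hcop1.pow_left, hPAB⟩

lemma not_pow_of_coeffs (d : ℕ) (hd : 2 ≤ d) (P : Polynomial ℂ) (h1 : P.coeff (d-1) = 0)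
    (k₀ : ℕ) (hk₀ : k₀ < d) (hk : P.coeff k₀ ≠ 0) :
    ¬ ∃ c : ℂ, P = (Polynomial.X - Polynomial.C c) ^ d := by
  rintro ⟨c, rfl⟩
  have hc : c = 0 := by
    rw [sub_eq_add_neg, ← Polynomial.C_neg, Polynomial.coeff_X_add_C_pow,
      show d - (d-1) = 1 by omega, pow_one] at h1
    have hch : d.choose (d-1) = d := by
      rw [Nat.choose_symm (show 1 ≤ d by omega), Nat.choose_one_right]
    rw [hch] at h1
    rcases mul_eq_zero.mp h1 with h | h
    · exact neg_eq_zero.mp h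
    · exact absurd h (Nat.cast_ne_zero.mpr (by omega))
  rw [hc] at hk
  simp only [map_zero, sub_zero, ← Polynomial.X_pow_eq_monomial] at hk
  rw [Polynomial.coeff_X_pow, if_neg (by omega : ¬ k₀ = d)] at hk
  exact hk rfl

theorem stmt5 (d : ℕ) (hd : 2 ≤ d) (h : Polynomial (PowerSeries ℂ)) (hmonic : h.Monic)
    (hdeg : h.natDegree = d)
    (hnot : ¬ ∃ b : PowerSeries ℂ, h = (Polynomial.X - Polynomial.C b) ^ d) :
    ∃ r : ℕ, 0 < r ∧ ∃ g₁ g₂ : Polynomial (PowerSeries ℂ),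
      g₁.Monic ∧ g₂.Monic ∧ g₁.natDegree < d ∧ g₂.natDegree < d ∧
      substPowPoly r h = g₁ * g₂ := by
  classical
  -- Step 1 : Tschirnhaus shift killing the coefficient of `y^(d-1)`
  set b : PowerSeries ℂ := -(h.coeff (d-1)) * PowerSeries.C ((d:ℂ)⁻¹) with hbdef
  set h' : Polynomial (PowerSeries ℂ) := h.comp (Polynomial.X + Polynomial.C b) with h'def
  have h'monic : h'.Monic := hmonic.comp_X_add_C b
  have h'deg : h'.natDegree = d := by
    rw [h'def, Polynomial.natDegree_comp, Polynomial.natDegree_X_add_C, mul_one, hdeg]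
  have hcomp_back : h'.comp (Polynomial.X - Polynomial.C b) = h := by
    rw [h'def, Polynomial.comp_assoc]
    simp [Polynomial.add_comp, Polynomial.X_comp, Polynomial.C_comp]
  have h'not : ¬ ∃ c : PowerSeries ℂ, h' = (Polynomial.X - Polynomial.C c) ^ d := by
    rintro ⟨c, hc⟩
    apply hnot
    refine ⟨b + c, ?_⟩
    rw [← hcomp_back, hc, Polynomial.pow_comp, Polynomial.sub_comp, Polynomial.X_comp,
      Polynomial.C_comp, Polynomial.C_add]
    ring_nf
  have hdC : (d : ℂ) ≠ 0 := Nat.cast_ne_zero.mpr (by omega)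
  have h'd1 : h'.coeff (d-1) = 0 := by
    rw [h'def, ← Polynomial.taylor_apply, Polynomial.taylor_coeff]
    have hhd : Polynomial.hasseDeriv (d-1) h =
        Polynomial.C (h.coeff (d-1)) + Polynomial.C ((d : PowerSeries ℂ)) * Polynomial.X := by
      ext n
      rw [Polynomial.hasseDeriv_coeff]
      rcases n with _ | n
      · simp [Nat.choose_self]
      rcases n with _ | n
      · have h1 : 1 + (d - 1) = d := by omega
        have h2 : d.choose (d-1) = d := by
          rw [Nat.choose_symm (show 1 ≤ d by omega), Nat.choose_one_right]
        rw [h1, h2, show h.coeff d = 1 from by rw [← hdeg]; exact hmonic.coeff_natDegree]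
        simp [Polynomial.coeff_C]
      · have h1 : h.coeff (n + 2 + (d - 1)) = 0 :=
          Polynomial.coeff_eq_zero_of_natDegree_lt (by omega)
        rw [h1]
        simp [Polynomial.coeff_C, Polynomial.coeff_X]
    rw [hhd]
    simp only [Polynomial.eval_add, Polynomial.eval_C, Polynomial.eval_mul, Polynomial.eval_X,
      hbdef]
    have hCd : (d : PowerSeries ℂ) = PowerSeries.C (d : ℂ) := by
      rw [map_natCast]
    rw [hCd]
    have hthis : (PowerSeries.C (d:ℂ)) * (PowerSeries.C ((d:ℂ)⁻¹)) = 1 := by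
      rw [← map_mul, mul_inv_cancel₀ hdC, map_one]
    linear_combination (-(h.coeff (d-1))) * hthis
  -- Step 2 : the set of nonzero lower coefficients
  set S := (Finset.range d).filter (fun k => h'.coeff k ≠ 0) with hSdef
  have hSne : S.Nonempty := by
    by_contra hS
    rw [Finset.not_nonempty_iff_eq_empty] at hS
    refine h'not ⟨0, ?_⟩
    rw [Polynomial.C_0, sub_zero]
    apply Polynomial.ext
    intro j
    rw [Polynomial.coeff_X_pow]
    rcases lt_trichotomy j d with hj | rfl | hj
    · rw [if_neg hj.ne]
      by_contra hne
      have hmem : j ∈ S := Finset.mem_filter.mpr ⟨Finset.mem_range.mpr hj, hne⟩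
      rw [hS] at hmem
      exact absurd hmem (Finset.notMem_empty j)
    · rw [if_pos rfl, ← h'deg]
      exact h'monic.coeff_natDegree
    · rw [if_neg (by omega)]
      exact Polynomial.coeff_eq_zero_of_natDegree_lt (by omega)
  have hex : ∀ k ∈ S, ∃ n, PowerSeries.coeff n (h'.coeff k) ≠ 0 := by
    intro k hk
    have hne := (Finset.mem_filter.mp hk).2
    by_contra hc
    push_neg at hc
    exact hne (PowerSeries.ext (by simpa using hc))
  set e : ℕ → ℕ := fun k =>
    if hk : ∃ n, PowerSeries.coeff n (h'.coeff k) ≠ 0 then Nat.find hk else 0 with hedef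
  have he_spec : ∀ k ∈ S, PowerSeries.coeff (e k) (h'.coeff k) ≠ 0 := by
    intro k hk
    have hx := hex k hk
    simp only [hedef, dif_pos hx]
    exact Nat.find_spec hx
  have he_min : ∀ k ∈ S, ∀ t, t < e k → PowerSeries.coeff t (h'.coeff k) = 0 := by
    intro k hk t ht
    have hx := hex k hk
    simp only [hedef, dif_pos hx] at ht
    simpa using Nat.find_min hx ht
  obtain ⟨k₀, hk₀S, hk₀min⟩ := S.exists_min_image (fun k => (e k : ℚ) / ((d : ℚ) - k)) hSne
  have hk₀d : k₀ < d := Finset.mem_range.mp (Finset.mem_filter.mp hk₀S).1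
  set r := d - k₀ with hrdef
  have hr : 0 < r := by omega
  set m := e k₀ with hmdef
  have hmin : ∀ k ∈ S, m * (d - k) ≤ e k * r := by
    intro k hk
    have hkd : k < d := Finset.mem_range.mp (Finset.mem_filter.mp hk).1
    have hQ := hk₀min k hk
    have hp1 : (0:ℚ) < (d:ℚ) - k₀ := by
      have : (k₀:ℚ) < d := by exact_mod_cast hk₀d
      linarith
    have hp2 : (0:ℚ) < (d:ℚ) - k := by
      have : (k:ℚ) < d := by exact_mod_cast hkd
      linarith
    rw [div_le_div_iff₀ hp1 hp2] at hQ
    have hc1 : ((d - k : ℕ) : ℚ) = (d:ℚ) - k := by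
      push_cast [Nat.cast_sub hkd.le]; ring
    have hc2 : ((d - k₀ : ℕ) : ℚ) = (d:ℚ) - k₀ := by
      push_cast [Nat.cast_sub hk₀d.le]; ring
    rw [← hc1, ← hc2] at hQ
    exact_mod_cast hQ
  -- Step 3 : divisibility after substitution
  have hdvd : ∀ k, ∃ c : PowerSeries ℂ,
      substPow r (h'.coeff k) = (PowerSeries.X : PowerSeries ℂ)^(m * (d - k)) * c := by
    intro k
    have hdd : (PowerSeries.X : PowerSeries ℂ)^(m * (d - k)) ∣ substPow r (h'.coeff k) := by
      rw [PowerSeries.X_pow_dvd_iff]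
      intro j hj
      rw [substPow_coeff]
      split_ifs with hjr
      · obtain ⟨t, rfl⟩ := hjr
        rcases eq_or_ne (h'.coeff k) 0 with hz | hz
        · rw [hz, map_zero]
        · have hkd2 : k < d := by
            by_contra hkge
            push_neg at hkge
            rcases eq_or_lt_of_le hkge with rfl | hklt
            · simp only [Nat.sub_self, Nat.mul_zero] at hj
              exact absurd hj (Nat.not_lt_zero _)
            · exact hz (Polynomial.coeff_eq_zero_of_natDegree_lt (by omega))
          have hkS : k ∈ S := Finset.mem_filter.mpr ⟨Finset.mem_range.mpr hkd2, hz⟩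
          rw [Nat.mul_div_cancel_left t hr]
          apply he_min k hkS
          have h2 : r * t < e k * r := lt_of_lt_of_le hj (hmin k hkS)
          rw [mul_comm (e k) r] at h2
          exact Nat.lt_of_mul_lt_mul_left h2
      · rfl
    exact hdd
  choose q hq using hdvd
  -- Step 4 : the scaled-down polynomial `Ht`
  set Ht : Polynomial (PowerSeries ℂ) := ∑ i ∈ Finset.range (d+1),
    Polynomial.C (q i) * Polynomial.X ^ i with hHtdef
  have hHtc : ∀ i, i ≤ d → Ht.coeff i = q i := by
    intro i hi
    rw [hHtdef, coeff_sumCX, if_pos (by omega)]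
  have hHthi : ∀ i, d < i → Ht.coeff i = 0 := by
    intro i hi
    rw [hHtdef, coeff_sumCX, if_neg (by omega)]
  have hqd : q d = 1 := by
    have h2 := hq d
    rw [Nat.sub_self, Nat.mul_zero, pow_zero, one_mul] at h2
    rw [← h2, show h'.coeff d = 1 from by rw [← h'deg]; exact h'monic.coeff_natDegree]
    exact substPow_one r hr
  obtain ⟨hHtm, hHtdeg⟩ := monic_natDegree_of Ht d (by rw [hHtc d le_rfl, hqd]) hHthi
  have hqd1 : q (d-1) = 0 := by
    have h2 := hq (d-1)
    rw [h'd1, substPow_zero'] at h2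
    have hX : (PowerSeries.X : PowerSeries ℂ)^(m*(d-(d-1))) ≠ 0 :=
      pow_ne_zero _ PowerSeries.X_ne_zero
    rcases mul_eq_zero.mp h2.symm with hcase | hcase
    · exact absurd hcase hX
    · exact hcase
  have hq0 : PowerSeries.constantCoeff (q k₀) ≠ 0 := by
    have h2 := congrArg (PowerSeries.coeff (m * r)) (hq k₀)
    rw [← hrdef] at h2
    rw [substPow_coeff, if_pos ⟨m, mul_comm m r⟩, Nat.mul_div_cancel m hr,
      PowerSeries.coeff_X_pow_mul', if_pos le_rfl, Nat.sub_self] at h2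
    rw [← PowerSeries.coeff_zero_eq_constantCoeff_apply, ← h2]
    exact he_spec k₀ hk₀S
  -- Step 5 : reduction mod x and its factorization
  set Ab : Polynomial ℂ := Ht.map (PowerSeries.constantCoeff) with hAbdef
  have hAbm : Ab.Monic := hHtm.map _
  have hAbdeg : Ab.natDegree = d := by
    rw [hAbdef, hHtm.natDegree_map, hHtdeg]
  have hAbd1 : Ab.coeff (d-1) = 0 := by
    rw [hAbdef, Polynomial.coeff_map, hHtc (d-1) (by omega), hqd1, map_zero]
  have hAbk₀ : Ab.coeff k₀ ≠ 0 := by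
    rw [hAbdef, Polynomial.coeff_map, hHtc k₀ (by omega)]
    exact hq0
  obtain ⟨A, B, hAm, hBm, hA1, hB1, hABd, hcop, hABs⟩ :=
    cfactor d hd Ab hAbm hAbdeg (not_pow_of_coeffs d hd Ab hAbd1 k₀ hk₀d hAbk₀)
  obtain ⟨G1, G2, hG1m, hG2m, hG1d, hG2d, hHt12⟩ :=
    hensel_lift Ht A B hAm hBm hHtm (by rw [hHtdeg, hABd]) hcop
      (by intro k; rw [← hABs, hAbdef, Polynomial.coeff_map])
  -- Step 6 : unscaling
  set U1 : Polynomial (PowerSeries ℂ) := ∑ i ∈ Finset.range (G1.natDegree + 1),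
    Polynomial.C ((PowerSeries.X : PowerSeries ℂ)^(m*(G1.natDegree - i)) * G1.coeff i) *
      Polynomial.X ^ i with hU1def
  set U2 : Polynomial (PowerSeries ℂ) := ∑ i ∈ Finset.range (G2.natDegree + 1),
    Polynomial.C ((PowerSeries.X : PowerSeries ℂ)^(m*(G2.natDegree - i)) * G2.coeff i) *
      Polynomial.X ^ i with hU2def
  have hU1c : ∀ i, U1.coeff i =
      (PowerSeries.X : PowerSeries ℂ)^(m*(G1.natDegree - i)) * G1.coeff i := by
    intro i
    rw [hU1def, coeff_sumCX]
    split_ifs with hi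
    · rfl
    · rw [Polynomial.coeff_eq_zero_of_natDegree_lt (by omega), mul_zero]
  have hU2c : ∀ i, U2.coeff i =
      (PowerSeries.X : PowerSeries ℂ)^(m*(G2.natDegree - i)) * G2.coeff i := by
    intro i
    rw [hU2def, coeff_sumCX]
    split_ifs with hi
    · rfl
    · rw [Polynomial.coeff_eq_zero_of_natDegree_lt (by omega), mul_zero]
  have hU1top : U1.coeff G1.natDegree = 1 := by
    rw [hU1c, Nat.sub_self, Nat.mul_zero, pow_zero, one_mul]
    exact hG1m.coeff_natDegree
  have hU1hi : ∀ i, G1.natDegree < i → U1.coeff i = 0 := by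
    intro i hi
    rw [hU1c, Polynomial.coeff_eq_zero_of_natDegree_lt hi, mul_zero]
  obtain ⟨hU1m, hU1deg⟩ := monic_natDegree_of U1 G1.natDegree hU1top hU1hi
  have hU2top : U2.coeff G2.natDegree = 1 := by
    rw [hU2c, Nat.sub_self, Nat.mul_zero, pow_zero, one_mul]
    exact hG2m.coeff_natDegree
  have hU2hi : ∀ i, G2.natDegree < i → U2.coeff i = 0 := by
    intro i hi
    rw [hU2c, Polynomial.coeff_eq_zero_of_natDegree_lt hi, mul_zero]
  obtain ⟨hU2m, hU2deg⟩ := monic_natDegree_of U2 G2.natDegree hU2top hU2hi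
  have hdsum : G1.natDegree + G2.natDegree = d := by rw [hG1d, hG2d]; exact hABd
  -- Step 7 : the key product identity
  have hmain : substPowPoly r h' = U1 * U2 := by
    rw [substPowPoly_eq_map r hr]
    apply Polynomial.ext
    intro k
    rw [Polynomial.coeff_map, Polynomial.coeff_mul]
    have hterm : ∀ p ∈ Finset.HasAntidiagonal.antidiagonal k, U1.coeff p.1 * U2.coeff p.2
        = (PowerSeries.X : PowerSeries ℂ)^(m*(G1.natDegree + G2.natDegree - k)) *
          (G1.coeff p.1 * G2.coeff p.2) := by
      intro p hp
      have hpk := Finset.HasAntidiagonal.mem_antidiagonal.mp hp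
      rw [hU1c, hU2c]
      by_cases h1 : p.1 ≤ G1.natDegree
      · by_cases h2 : p.2 ≤ G2.natDegree
        · have hexp : m * (G1.natDegree - p.1) + m * (G2.natDegree - p.2)
              = m * (G1.natDegree + G2.natDegree - k) := by
            rw [← Nat.mul_add]
            congr 1
            omega
          rw [mul_mul_mul_comm, ← pow_add, hexp]
        · push_neg at h2
          simp [Polynomial.coeff_eq_zero_of_natDegree_lt h2]
      · push_neg at h1
        simp [Polynomial.coeff_eq_zero_of_natDegree_lt h1]
    rw [Finset.sum_congr rfl hterm, ← Finset.mul_sum, ← Polynomial.coeff_mul, ← hHt12, hdsum]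
    by_cases hk : k ≤ d
    · rw [hHtc k hk]
      exact hq k
    · push_neg at hk
      rw [hHthi k hk, mul_zero,
        Polynomial.coeff_eq_zero_of_natDegree_lt (by omega : h'.natDegree < k)]
      exact map_zero _
  -- Step 8 : undo the Tschirnhaus shift and conclude
  refine ⟨r, hr, U1.comp (Polynomial.X - Polynomial.C (substPow r b)),
    U2.comp (Polynomial.X - Polynomial.C (substPow r b)),
    hU1m.comp_X_sub_C _, hU2m.comp_X_sub_C _, ?_, ?_, ?_⟩
  · rw [Polynomial.natDegree_comp, Polynomial.natDegree_X_sub_C, mul_one, hU1deg, hG1d]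
    omega
  · rw [Polynomial.natDegree_comp, Polynomial.natDegree_X_sub_C, mul_one, hU2deg, hG2d]
    omega
  · have hmap : substPowPoly r h
        = (substPowPoly r h').comp (Polynomial.X - Polynomial.C (substPow r b)) := by
      conv_lhs => rw [← hcomp_back]
      rw [substPowPoly_eq_map r hr, substPowPoly_eq_map r hr, Polynomial.map_comp]
      congr 1
      rw [Polynomial.map_sub, Polynomial.map_X, Polynomial.map_C]
      rfl
    rw [hmap, hmain, Polynomial.mul_comp]
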